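/- (Pointwise algebraic estimate, Lemma 2.3) Let n ≥ 3, let A be an n×n real symmetric trace-free matrix, and let W be a (0,4)-tensor with the symmetries of the Weyl tensor and all traces zero (Σᵢ W_{ijil} = 0 for all j,l). Then |−Σ W_{ijkl}A_{ik}A_{jl} + (n/(2(n−2)))·tr(A³)| ≤ √((n−2)/(2(n−1)))·‖A‖²·(|W|² + (n/(2(n−2)))‖A‖²)^{1/2}. -/

import Mathlib

open Finset

set_option linter.unusedSectionVars false
set_option maxHeartbeats 1000000

namespace Stmt8
noncomputable section

variable {n : ℕ}

/-- Kronecker delta. -/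
def dd (i j : Fin n) : ℝ := if i = j then 1 else 0

@[simp] lemma dd_self (i : Fin n) : dd i i = 1 := by simp [dd]

lemma sum_mul_dd_left (f : Fin n → ℝ) (j : Fin n) : ∑ i, f i * dd j i = f j := by
  simp [dd, mul_ite, mul_one, mul_zero, Finset.sum_ite_eq]

lemma sum_mul_dd_right (f : Fin n → ℝ) (l : Fin n) : ∑ i, f i * dd i l = f l := by
  simp [dd, mul_ite, mul_one, mul_zero, Finset.sum_ite_eq']

lemma sum_dd_diag : (∑ i : Fin n, dd i i) = (n : ℝ) := by
  simp [dd, Finset.card_univ]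

section Tensors

variable (A : Fin n → Fin n → ℝ)

def aa : ℝ := ∑ i, ∑ j, A i j * A i j
def M2 (i j : Fin n) : ℝ := ∑ m, A i m * A m j
def BB (i j : Fin n) : ℝ := M2 A i j - (aa A / n) * dd i j
def qq : ℝ := ∑ i, ∑ j, M2 A i j * M2 A i j

def VV (i j k l : Fin n) : ℝ :=
  (A i k * A j l - A i l * A j k) / 2
  + (1 / (2 * ((n : ℝ) - 2))) *
      (BB A i k * dd j l + BB A j l * dd i k - BB A i l * dd j k - BB A j k * dd i l)
  + (aa A / (2 * n * ((n : ℝ) - 1))) * (dd i k * dd j l - dd i l * dd j k)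

variable (hsym : ∀ i j, A i j = A j i) (htr : ∑ i, A i i = 0)

include hsym in
lemma trM2 : ∑ i, M2 A i i = aa A := by
  simp only [M2, aa]
  exact Finset.sum_congr rfl fun i _ => Finset.sum_congr rfl fun m _ => by rw [hsym m i]

include hsym in
lemma trBB (hn : 0 < n) : ∑ i, BB A i i = 0 := by
  simp only [BB, dd_self, mul_one, Finset.sum_sub_distrib, trM2 A hsym,
    Finset.sum_const, Finset.card_univ, Fintype.card_fin, nsmul_eq_mul]
  have : (n : ℝ) ≠ 0 := Nat.cast_ne_zero.mpr hn.ne'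
  field_simp
  ring

lemma hMrow (j l : Fin n) : ∑ i, A i l * A j i = M2 A j l := by
  simp only [M2]
  exact Finset.sum_congr rfl fun i _ => mul_comm _ _

include hsym in
lemma hMcol (i j : Fin n) : ∑ k, A i k * A j k = M2 A i j := by
  simp only [M2]
  exact Finset.sum_congr rfl fun k _ => by rw [hsym j k]

include hsym htr in
lemma trV (hn : 3 ≤ n) : ∀ j l, ∑ i, VV A i j i l = 0 := by
  intro j l
  have key : ∀ i, VV A i j i l =
      A i i * (A j l * (1/2)) - (A i l * A j i) * (1/2)
      + (1 / (2 * ((n : ℝ) - 2))) * (BB A i i * dd j l)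
      + (1 / (2 * ((n : ℝ) - 2))) * BB A j l
      - (1 / (2 * ((n : ℝ) - 2))) * (BB A i l * dd j i)
      - (1 / (2 * ((n : ℝ) - 2))) * (BB A j i * dd i l)
      + (aa A / (2 * n * ((n : ℝ) - 1))) * dd j l
      - (aa A / (2 * n * ((n : ℝ) - 1))) * (dd i l * dd j i) := by
    intro i; simp only [VV, dd_self]; ring
  rw [Finset.sum_congr rfl fun i _ => key i]
  simp only [Finset.sum_add_distrib, Finset.sum_sub_distrib, ← Finset.mul_sum,
    ← Finset.sum_mul, sum_mul_dd_left, sum_mul_dd_right, Finset.sum_const,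
    Finset.card_univ, Fintype.card_fin, nsmul_eq_mul,
    trBB A hsym (by omega : 0 < n), hMrow A, htr]
  have hcast : (3:ℝ) ≤ (n:ℝ) := by exact_mod_cast hn
  have h1 : ((n : ℝ) - 2) ≠ 0 := by nlinarith
  have h2 : ((n : ℝ) - 1) ≠ 0 := by nlinarith
  have h3 : (n : ℝ) ≠ 0 := by nlinarith
  simp only [BB]
  field_simp
  ring

/-- symmetries of V -/
lemma Vu1 : ∀ i j k l, VV A i j k l = - VV A j i k l := by
  intro i j k l; simp only [VV]; ring

lemma Vu2 : ∀ i j k l, VV A i j k l = - VV A i j l k := by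
  intro i j k l; simp only [VV]; ring

end Tensors

section Traces

variable (A : Fin n → Fin n → ℝ)
variable (U : Fin n → Fin n → Fin n → Fin n → ℝ) (B : Fin n → Fin n → ℝ)
variable (u1 : ∀ i j k l, U i j k l = - U j i k l)
variable (u2 : ∀ i j k l, U i j k l = - U i j l k)
variable (trU : ∀ j l, ∑ i, U i j i l = 0)

include u1 u2 trU in
lemma tr2 : ∀ i k, ∑ j, U i j k j = 0 := by
  intro i k
  have h : ∀ j, U i j k j = U j i j k := by
    intro j; rw [u1 i j k j, u2 j i k j]; ring
  simp only [h]; exact trU i k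

include u1 u2 trU in
lemma tr3 : ∀ i l, ∑ j, U i j j l = 0 := by
  intro i l
  have h : ∀ j, U i j j l = - U i j l j := fun j => u2 i j j l
  simp only [h, Finset.sum_neg_distrib]
  rw [tr2 U u1 u2 trU i l, neg_zero]

include u2 trU in
lemma tr4 : ∀ j k, ∑ i, U i j k i = 0 := by
  intro j k
  have h : ∀ i, U i j k i = - U i j i k := fun i => u2 i j k i
  simp only [h, Finset.sum_neg_distrib]
  rw [trU j k, neg_zero]

include u1 u2 trU in
lemma vanish1 : ∑ i, ∑ j, ∑ k, ∑ l, U i j k l * (B i k * dd j l) = 0 := by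
  have h1 : ∀ i j k, ∑ l, U i j k l * (B i k * dd j l) = U i j k j * B i k := by
    intro i j k
    simp [dd, mul_ite, mul_one, mul_zero, Finset.sum_ite_eq]
  simp only [h1]
  refine Finset.sum_eq_zero fun i _ => ?_
  rw [Finset.sum_comm]
  refine Finset.sum_eq_zero fun k _ => ?_
  rw [← Finset.sum_mul, tr2 U u1 u2 trU i k, zero_mul]

include trU in
lemma vanish2 : ∑ i, ∑ j, ∑ k, ∑ l, U i j k l * (B j l * dd i k) = 0 := by
  have h1 : ∀ i j l, ∑ k, U i j k l * (B j l * dd i k) = U i j i l * B j l := by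
    intro i j l
    simp [dd, mul_ite, mul_one, mul_zero, Finset.sum_ite_eq]
  have h2 : ∀ i j, ∑ k, ∑ l, U i j k l * (B j l * dd i k) = ∑ l, U i j i l * B j l := by
    intro i j
    rw [Finset.sum_comm]
    exact Finset.sum_congr rfl fun l _ => h1 i j l
  simp only [h2]
  rw [Finset.sum_comm]
  refine Finset.sum_eq_zero fun j _ => ?_
  rw [Finset.sum_comm]
  refine Finset.sum_eq_zero fun l _ => ?_
  rw [← Finset.sum_mul, trU j l, zero_mul]

include u1 u2 trU in
lemma vanish3 : ∑ i, ∑ j, ∑ k, ∑ l, U i j k l * (B i l * dd j k) = 0 := by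
  have h1 : ∀ i j l, ∑ k, U i j k l * (B i l * dd j k) = U i j j l * B i l := by
    intro i j l
    simp [dd, mul_ite, mul_one, mul_zero, Finset.sum_ite_eq]
  have h2 : ∀ i j, ∑ k, ∑ l, U i j k l * (B i l * dd j k) = ∑ l, U i j j l * B i l := by
    intro i j
    rw [Finset.sum_comm]
    exact Finset.sum_congr rfl fun l _ => h1 i j l
  simp only [h2]
  refine Finset.sum_eq_zero fun i _ => ?_
  rw [Finset.sum_comm]
  refine Finset.sum_eq_zero fun l _ => ?_
  rw [← Finset.sum_mul, tr3 U u1 u2 trU i l, zero_mul]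

include u2 trU in
lemma vanish4 : ∑ i, ∑ j, ∑ k, ∑ l, U i j k l * (B j k * dd i l) = 0 := by
  have h1 : ∀ i j k, ∑ l, U i j k l * (B j k * dd i l) = U i j k i * B j k := by
    intro i j k
    simp [dd, mul_ite, mul_one, mul_zero, Finset.sum_ite_eq]
  simp only [h1]
  rw [Finset.sum_comm]
  refine Finset.sum_eq_zero fun j _ => ?_
  rw [Finset.sum_comm]
  refine Finset.sum_eq_zero fun k _ => ?_
  rw [← Finset.sum_mul, tr4 U u2 trU j k, zero_mul]

include trU in
lemma vanish5 : ∑ i, ∑ j, ∑ k, ∑ l, U i j k l * (dd i k * dd j l) = 0 := by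
  have h1 : ∀ i j k, ∑ l, U i j k l * (dd i k * dd j l) = U i j k j * dd i k := by
    intro i j k
    simp [dd, mul_ite, mul_one, mul_zero, Finset.sum_ite_eq]
  have h2 : ∀ i j, ∑ k, U i j k j * dd i k = U i j i j := by
    intro i j
    simp [dd, mul_ite, mul_one, mul_zero, Finset.sum_ite_eq]
  simp only [h1, h2]
  rw [Finset.sum_comm]
  exact Finset.sum_eq_zero fun j _ => trU j j

include u1 u2 trU in
lemma vanish6 : ∑ i, ∑ j, ∑ k, ∑ l, U i j k l * (dd i l * dd j k) = 0 := by
  have h1 : ∀ i j k, ∑ l, U i j k l * (dd i l * dd j k) = U i j k i * dd j k := by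
    intro i j k
    simp [dd, mul_ite, mul_one, mul_zero, Finset.sum_ite_eq]
  have h2 : ∀ i j, ∑ k, U i j k i * dd j k = U i j j i := by
    intro i j
    simp [dd, mul_ite, mul_one, mul_zero, Finset.sum_ite_eq]
  simp only [h1, h2]
  exact Finset.sum_eq_zero fun i _ => tr3 U u1 u2 trU i i

include u2 in
lemma swapP1 : ∑ i, ∑ j, ∑ k, ∑ l, U i j k l * (A i l * A j k)
    = - ∑ i, ∑ j, ∑ k, ∑ l, U i j k l * A i k * A j l := by
  have h : ∀ i j, ∑ k, ∑ l, U i j k l * (A i l * A j k)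
      = ∑ k, ∑ l, -(U i j k l * A i k * A j l) := by
    intro i j
    rw [Finset.sum_comm]
    refine Finset.sum_congr rfl fun k _ => Finset.sum_congr rfl fun l _ => ?_
    rw [u2 i j l k]; ring
  simp only [h, Finset.sum_neg_distrib]

include u1 u2 trU in
lemma contr : ∑ i, ∑ j, ∑ k, ∑ l, U i j k l * VV A i j k l
    = ∑ i, ∑ j, ∑ k, ∑ l, U i j k l * A i k * A j l := by
  have expand : ∀ i j k l, U i j k l * VV A i j k l =
      U i j k l * A i k * A j l * (1/2) - U i j k l * (A i l * A j k) * (1/2)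
      + (1 / (2 * ((n : ℝ) - 2))) * (U i j k l * (BB A i k * dd j l))
      + (1 / (2 * ((n : ℝ) - 2))) * (U i j k l * (BB A j l * dd i k))
      - (1 / (2 * ((n : ℝ) - 2))) * (U i j k l * (BB A i l * dd j k))
      - (1 / (2 * ((n : ℝ) - 2))) * (U i j k l * (BB A j k * dd i l))
      + (aa A / (2 * n * ((n : ℝ) - 1))) * (U i j k l * (dd i k * dd j l))
      - (aa A / (2 * n * ((n : ℝ) - 1))) * (U i j k l * (dd i l * dd j k)) := by
    intro i j k l; simp only [VV]; ring
  simp only [expand, Finset.sum_add_distrib, Finset.sum_sub_distrib,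
    ← Finset.mul_sum, ← Finset.sum_mul]
  rw [vanish1 U (BB A) u1 u2 trU, vanish2 U (BB A) trU, vanish3 U (BB A) u1 u2 trU,
    vanish4 U (BB A) u2 trU, vanish5 U trU, vanish6 U u1 u2 trU, swapP1 A U u2]
  ring

end Traces

section Pieces

variable (A : Fin n → Fin n → ℝ)
variable (hsym : ∀ i j, A i j = A j i) (htr : ∑ i, A i i = 0)

lemma p1 : ∑ i, ∑ j, ∑ k, ∑ l, (A i k * A i k) * (A j l * A j l) = aa A * aa A := by
  simp only [← Finset.mul_sum, ← Finset.sum_mul]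
  rfl

include hsym in
lemma p2 : ∑ i, ∑ j, ∑ k, ∑ l, (A i k * A j k) * (A i l * A j l) = qq A := by
  simp only [← Finset.mul_sum, ← Finset.sum_mul]
  have h : ∀ i j : Fin n, (∑ k, A i k * A j k) * (∑ l, A i l * A j l)
      = M2 A i j * M2 A i j := by
    intro i j; rw [hMcol A hsym i j]
  simp only [h]
  rfl

include htr in
lemma p3 : ∑ i, ∑ j, ∑ k, ∑ l, (BB A i k * A i k) * (A j l * dd j l) = 0 := by
  have h1 : ∀ i j k, ∑ l, (BB A i k * A i k) * (A j l * dd j l)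
      = (BB A i k * A i k) * A j j := by
    intro i j k
    rw [← Finset.mul_sum, sum_mul_dd_left (fun l => A j l) j]
  simp only [h1]
  refine Finset.sum_eq_zero fun i _ => ?_
  rw [Finset.sum_comm]
  refine Finset.sum_eq_zero fun k _ => ?_
  rw [← Finset.mul_sum, htr, mul_zero]

include htr in
lemma p4 : ∑ i, ∑ j, ∑ k, ∑ l, (BB A j l * A j l) * (A i k * dd i k) = 0 := by
  have h1 : ∀ i j, ∑ k, ∑ l, (BB A j l * A j l) * (A i k * dd i k)
      = ∑ l, (BB A j l * A j l) * A i i := by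
    intro i j
    rw [Finset.sum_comm]
    refine Finset.sum_congr rfl fun l _ => ?_
    rw [← Finset.mul_sum, sum_mul_dd_left (fun k => A i k) i]
  simp only [h1]
  rw [Finset.sum_comm]
  refine Finset.sum_eq_zero fun j _ => ?_
  rw [Finset.sum_comm]
  refine Finset.sum_eq_zero fun l _ => ?_
  rw [← Finset.mul_sum, htr, mul_zero]

lemma p5 : ∑ i, ∑ j, ∑ k, ∑ l, (BB A i l * (A i k * A j l)) * dd j k
    = ∑ i, ∑ j, BB A i j * M2 A i j := by
  have h1 : ∀ i j l, ∑ k, (BB A i l * (A i k * A j l)) * dd j k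
      = BB A i l * (A i j * A j l) := by
    intro i j l
    exact sum_mul_dd_left (fun k => BB A i l * (A i k * A j l)) j
  have h2 : ∀ i j, ∑ k, ∑ l, (BB A i l * (A i k * A j l)) * dd j k
      = ∑ l, BB A i l * (A i j * A j l) := by
    intro i j
    rw [Finset.sum_comm]
    exact Finset.sum_congr rfl fun l _ => h1 i j l
  simp only [h2]
  refine Finset.sum_congr rfl fun i _ => ?_
  rw [Finset.sum_comm]
  refine Finset.sum_congr rfl fun l _ => ?_
  rw [← Finset.mul_sum]
  rfl

lemma p6 : ∑ i, ∑ j, ∑ k, ∑ l, (BB A j k * (A i k * A j l)) * dd i l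
    = ∑ i, ∑ j, BB A i j * M2 A i j := by
  have h1 : ∀ i j k, ∑ l, (BB A j k * (A i k * A j l)) * dd i l
      = BB A j k * (A i k * A j i) := by
    intro i j k
    exact sum_mul_dd_left (fun l => BB A j k * (A i k * A j l)) i
  simp only [h1]
  rw [Finset.sum_comm]
  refine Finset.sum_congr rfl fun j _ => ?_
  rw [Finset.sum_comm]
  refine Finset.sum_congr rfl fun k _ => ?_
  rw [← Finset.mul_sum, hMrow A _ _]

include htr in
lemma p7 : ∑ i, ∑ j, ∑ k, ∑ l, (A i k * dd i k) * (A j l * dd j l) = 0 := by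
  have h1 : ∀ i j k, ∑ l, (A i k * dd i k) * (A j l * dd j l)
      = (A i k * dd i k) * A j j := by
    intro i j k
    rw [← Finset.mul_sum, sum_mul_dd_left (fun l => A j l) j]
  simp only [h1]
  refine Finset.sum_eq_zero fun i _ => ?_
  rw [Finset.sum_comm]
  refine Finset.sum_eq_zero fun k _ => ?_
  rw [← Finset.mul_sum, htr, mul_zero]

include hsym in
lemma p8 : ∑ i, ∑ j, ∑ k, ∑ l, (A i k * dd j k) * (A j l * dd i l) = aa A := by
  have h1 : ∀ i j k, ∑ l, (A i k * dd j k) * (A j l * dd i l)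
      = (A i k * dd j k) * A j i := by
    intro i j k
    rw [← Finset.mul_sum, sum_mul_dd_left (fun l => A j l) i]
  have h2 : ∀ i j, ∑ k, (A i k * dd j k) * A j i = A i j * A j i := by
    intro i j
    rw [← Finset.sum_mul, sum_mul_dd_left (fun k => A i k) j]
  simp only [h1, h2]
  simp only [aa]
  exact Finset.sum_congr rfl fun i _ => Finset.sum_congr rfl fun j _ => by rw [hsym j i]

end Pieces


section Scalars

variable (A : Fin n → Fin n → ℝ)
variable (hsym : ∀ i j, A i j = A j i) (htr : ∑ i, A i i = 0)

lemma sum4_cmul (c : ℝ) (f : Fin n → Fin n → Fin n → Fin n → ℝ) :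
    ∑ i, ∑ j, ∑ k, ∑ l, c * f i j k l = c * ∑ i, ∑ j, ∑ k, ∑ l, f i j k l := by
  simp only [Finset.mul_sum]

lemma sum4_mulc (c : ℝ) (f : Fin n → Fin n → Fin n → Fin n → ℝ) :
    ∑ i, ∑ j, ∑ k, ∑ l, f i j k l * c = (∑ i, ∑ j, ∑ k, ∑ l, f i j k l) * c := by
  simp only [Finset.sum_mul]

include hsym htr in
lemma Vval (hn : 3 ≤ n) :
    ∑ i, ∑ j, ∑ k, ∑ l, VV A i j k l * A i k * A j l
    = (aa A * aa A - qq A) * (1/2)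
      - (1 / ((n : ℝ) - 2)) * (∑ i, ∑ j, BB A i j * M2 A i j)
      - (aa A / (2 * n * ((n : ℝ) - 1))) * aa A := by
  have expand : ∀ i j k l, VV A i j k l * A i k * A j l =
      (A i k * A i k) * (A j l * A j l) * (1/2)
      - (A i k * A j k) * (A i l * A j l) * (1/2)
      + (1 / (2 * ((n : ℝ) - 2))) * ((BB A i k * A i k) * (A j l * dd j l))
      + (1 / (2 * ((n : ℝ) - 2))) * ((BB A j l * A j l) * (A i k * dd i k))
      - (1 / (2 * ((n : ℝ) - 2))) * ((BB A i l * (A i k * A j l)) * dd j k)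
      - (1 / (2 * ((n : ℝ) - 2))) * ((BB A j k * (A i k * A j l)) * dd i l)
      + (aa A / (2 * n * ((n : ℝ) - 1))) * ((A i k * dd i k) * (A j l * dd j l))
      - (aa A / (2 * n * ((n : ℝ) - 1))) * ((A i k * dd j k) * (A j l * dd i l)) := by
    intro i j k l; simp only [VV]; ring
  simp only [expand, Finset.sum_add_distrib, Finset.sum_sub_distrib, sum4_cmul, sum4_mulc]
  rw [p1 A, p2 A hsym, p3 A htr, p4 A htr, p5 A, p6 A, p7 A htr, p8 A hsym]
  have hcast : (3:ℝ) ≤ (n:ℝ) := by exact_mod_cast hn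
  have h1 : ((n : ℝ) - 2) ≠ 0 := by nlinarith
  have h2 : ((n : ℝ) - 1) ≠ 0 := by nlinarith
  have h3 : (n : ℝ) ≠ 0 := by nlinarith
  field_simp
  ring

lemma sum_dd_one (i : Fin n) : ∑ j, dd i j = 1 := by
  simp [dd, Finset.sum_ite_eq]

include hsym in
lemma DDval (hn : 0 < n) :
    ∑ i, ∑ j, BB A i j * M2 A i j = qq A - aa A * aa A / n := by
  have e : ∀ i j, BB A i j * M2 A i j
      = M2 A i j * M2 A i j - (aa A / n) * (M2 A i j * dd i j) := by
    intro i j; simp only [BB]; ring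
  simp only [e, Finset.sum_sub_distrib, ← Finset.mul_sum, sum_mul_dd_left]
  rw [trM2 A hsym]
  rw [show (∑ i, ∑ j, M2 A i j * M2 A i j) = qq A from rfl]
  have hn0 : (n : ℝ) ≠ 0 := Nat.cast_ne_zero.mpr hn.ne'
  field_simp

include hsym in
lemma BBsq (hn : 0 < n) :
    ∑ i, ∑ j, BB A i j * BB A i j = qq A - aa A * aa A / n := by
  have e : ∀ i j, BB A i j * BB A i j
      = M2 A i j * M2 A i j - (2 * (aa A / n)) * (M2 A i j * dd i j)
        + ((aa A / n) * (aa A / n)) * dd i j := by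
    intro i j
    by_cases h : i = j
    · subst h; simp only [BB, dd_self]; ring
    · simp only [BB, dd, if_neg h]; ring
  simp only [e, Finset.sum_add_distrib, Finset.sum_sub_distrib, ← Finset.mul_sum,
    sum_mul_dd_left, sum_dd_one, mul_one, Finset.sum_const, Finset.card_univ,
    Fintype.card_fin, nsmul_eq_mul]
  rw [trM2 A hsym]
  rw [show (∑ i, ∑ j, M2 A i j * M2 A i j) = qq A from rfl]
  have hn0 : (n : ℝ) ≠ 0 := Nat.cast_ne_zero.mpr hn.ne'
  field_simp
  ring

include hsym htr in
lemma hAB : ∑ i, ∑ j, A i j * BB A i j = ∑ i, ∑ j, ∑ k, A i j * A j k * A k i := by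
  have e1 : ∀ i j, A i j * BB A i j
      = (∑ k, A i j * A j k * A k i) - aa A / n * (A i j * dd i j) := by
    intro i j
    simp only [BB, M2]
    rw [mul_sub, Finset.mul_sum]
    congr 1
    · refine Finset.sum_congr rfl fun m _ => ?_
      rw [hsym i m, hsym m j]
      ring
    · ring
  simp only [e1, Finset.sum_sub_distrib, ← Finset.mul_sum, sum_mul_dd_left]
  rw [htr, mul_zero, sub_zero]

end Scalars

section CS

lemma cs2 (f g : Fin n → Fin n → ℝ) :
    (∑ i, ∑ j, f i j * g i j)^2
      ≤ (∑ i, ∑ j, f i j * f i j) * (∑ i, ∑ j, g i j * g i j) := by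
  have h := Finset.sum_mul_sq_le_sq_mul_sq Finset.univ
    (fun p : Fin n × Fin n => f p.1 p.2) (fun p : Fin n × Fin n => g p.1 p.2)
  simpa [Fintype.sum_prod_type, pow_two] using h

lemma cs4 (U V : Fin n → Fin n → Fin n → Fin n → ℝ) :
    (∑ i, ∑ j, ∑ k, ∑ l, U i j k l * V i j k l)^2
      ≤ (∑ i, ∑ j, ∑ k, ∑ l, U i j k l * U i j k l)
        * (∑ i, ∑ j, ∑ k, ∑ l, V i j k l * V i j k l) := by
  have h := Finset.sum_mul_sq_le_sq_mul_sq Finset.univ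
    (fun p : Fin n × Fin n × Fin n × Fin n => U p.1 p.2.1 p.2.2.1 p.2.2.2)
    (fun p : Fin n × Fin n × Fin n × Fin n => V p.1 p.2.1 p.2.2.1 p.2.2.2)
  simpa [Fintype.sum_prod_type, pow_two] using h

end CS

lemma final_abs (s t a w D c al : ℝ) (hc : 0 ≤ c) (hal : 0 ≤ al) (ha : 0 ≤ a) (hw : 0 ≤ w)
    (hD : 0 ≤ D) (hM : 0 ≤ al * (a*a) - c*D)
    (hs2 : s^2 ≤ w * (al * (a*a) - c*D)) (ht2 : t^2 ≤ a*D) :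
    |-s + c*t| ≤ Real.sqrt al * a * Real.sqrt (w + c*a) := by
  set M := al * (a*a) - c*D with hMdef
  have h1 : |s| ≤ Real.sqrt w * Real.sqrt M := by
    rw [← Real.sqrt_sq_eq_abs, ← Real.sqrt_mul hw]
    exact Real.sqrt_le_sqrt hs2
  have h2 : |c*t| ≤ Real.sqrt (c*a) * Real.sqrt (c*D) := by
    rw [← Real.sqrt_sq_eq_abs, ← Real.sqrt_mul (by positivity : (0:ℝ) ≤ c*a)]
    apply Real.sqrt_le_sqrt
    nlinarith [ht2, sq_nonneg c]
  have h3 : |-s + c*t| ≤ Real.sqrt w * Real.sqrt M + Real.sqrt (c*a) * Real.sqrt (c*D) := by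
    calc |-s + c*t| ≤ |-s| + |c*t| := abs_add_le _ _
    _ = |s| + |c*t| := by rw [abs_neg]
    _ ≤ _ := add_le_add h1 h2
  have hkey : Real.sqrt w * Real.sqrt M + Real.sqrt (c*a) * Real.sqrt (c*D)
      ≤ Real.sqrt (w + c*a) * Real.sqrt (M + c*D) := by
    have e1 : Real.sqrt w ^ 2 = w := Real.sq_sqrt hw
    have e2 : Real.sqrt M ^ 2 = M := Real.sq_sqrt hM
    have e3 : Real.sqrt (c*a) ^ 2 = c*a := Real.sq_sqrt (by positivity)
    have e4 : Real.sqrt (c*D) ^ 2 = c*D := Real.sq_sqrt (by positivity)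
    have hsq : (Real.sqrt w * Real.sqrt M + Real.sqrt (c*a) * Real.sqrt (c*D))^2
        ≤ (w + c*a) * (M + c*D) := by
      nlinarith [sq_nonneg (Real.sqrt w * Real.sqrt (c*D) - Real.sqrt (c*a) * Real.sqrt M)]
    have hnn : 0 ≤ Real.sqrt w * Real.sqrt M + Real.sqrt (c*a) * Real.sqrt (c*D) := by
      positivity
    calc Real.sqrt w * Real.sqrt M + Real.sqrt (c*a) * Real.sqrt (c*D)
        = Real.sqrt ((Real.sqrt w * Real.sqrt M + Real.sqrt (c*a) * Real.sqrt (c*D))^2) :=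
          (Real.sqrt_sq hnn).symm
    _ ≤ Real.sqrt ((w + c*a) * (M + c*D)) := Real.sqrt_le_sqrt hsq
    _ = Real.sqrt (w + c*a) * Real.sqrt (M + c*D) := Real.sqrt_mul (by positivity) _
  have hMD : M + c*D = al * (a*a) := by rw [hMdef]; ring
  calc |-s + c*t| ≤ Real.sqrt w * Real.sqrt M + Real.sqrt (c*a) * Real.sqrt (c*D) := h3
  _ ≤ Real.sqrt (w + c*a) * Real.sqrt (M + c*D) := hkey
  _ = Real.sqrt (w + c*a) * (Real.sqrt al * a) := by
      rw [hMD, Real.sqrt_mul hal, Real.sqrt_mul_self ha]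
  _ = Real.sqrt al * a * Real.sqrt (w + c*a) := by ring

end
end Stmt8

open Finset

theorem stmt_8 (n : ℕ) (hn : 3 ≤ n) (A : Fin n → Fin n → ℝ)
    (hsym : ∀ i j, A i j = A j i) (htr : ∑ i, A i i = 0)
    (W : Fin n → Fin n → Fin n → Fin n → ℝ)
    (hW1 : ∀ i j k l, W i j k l = - W j i k l)
    (hW2 : ∀ i j k l, W i j k l = - W i j l k)
    (hW3 : ∀ i j k l, W i j k l = W k l i j)
    (hB : ∀ i j k l, W i j k l + W i k l j + W i l j k = 0)
    (hTrW : ∀ j l, ∑ i, W i j i l = 0) :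
    |-(∑ i, ∑ j, ∑ k, ∑ l, W i j k l * A i k * A j l)
        + ((n : ℝ) / (2 * ((n : ℝ) - 2))) * ∑ i, ∑ j, ∑ k, A i j * A j k * A k i|
      ≤ Real.sqrt (((n : ℝ) - 2) / (2 * ((n : ℝ) - 1))) * (∑ i, ∑ j, (A i j) ^ 2) *
          Real.sqrt ((∑ i, ∑ j, ∑ k, ∑ l, (W i j k l) ^ 2)
            + ((n : ℝ) / (2 * ((n : ℝ) - 2))) * ∑ i, ∑ j, (A i j) ^ 2) := by
  simp only [pow_two]
  rw [show (∑ i, ∑ j, A i j * A i j) = Stmt8.aa A from rfl]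
  have hn0 : 0 < n := by omega
  have hcast : (3:ℝ) ≤ (n:ℝ) := by exact_mod_cast hn
  have hd2 : (0:ℝ) < (n:ℝ) - 2 := by nlinarith
  have hd1 : (0:ℝ) < (n:ℝ) - 1 := by nlinarith
  have hd0 : (0:ℝ) < (n:ℝ) := by nlinarith
  have contrW := Stmt8.contr A W hW1 hW2 hTrW
  have trVV := Stmt8.trV A hsym htr hn
  have contrV := Stmt8.contr A (Stmt8.VV A) (Stmt8.Vu1 A) (Stmt8.Vu2 A) trVV
  have hVval := Stmt8.Vval A hsym htr hn
  have hDDval := Stmt8.DDval A hsym hn0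
  have hBBsq := Stmt8.BBsq A hsym hn0
  have hABv := Stmt8.hAB A hsym htr
  set c : ℝ := (n : ℝ) / (2 * ((n : ℝ) - 2)) with hc_def
  set al : ℝ := ((n : ℝ) - 2) / (2 * ((n : ℝ) - 1)) with hal_def
  set D : ℝ := ∑ i, ∑ j, Stmt8.BB A i j * Stmt8.BB A i j with hD_def
  -- value of |V|^2
  have hVsq : (∑ i, ∑ j, ∑ k, ∑ l, Stmt8.VV A i j k l * Stmt8.VV A i j k l)
      = al * (Stmt8.aa A * Stmt8.aa A) - c * D := by
    rw [contrV, hVval, hDDval, hBBsq, hc_def, hal_def]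
    field_simp
    ring
  have hM : 0 ≤ al * (Stmt8.aa A * Stmt8.aa A) - c * D := by
    rw [← hVsq]
    exact Finset.sum_nonneg fun i _ => Finset.sum_nonneg fun j _ =>
      Finset.sum_nonneg fun k _ => Finset.sum_nonneg fun l _ => mul_self_nonneg _
  have hD0 : 0 ≤ D := by
    rw [hD_def]
    exact Finset.sum_nonneg fun i _ => Finset.sum_nonneg fun j _ => mul_self_nonneg _
  have ha : 0 ≤ Stmt8.aa A :=
    Finset.sum_nonneg fun i _ => Finset.sum_nonneg fun j _ => mul_self_nonneg _
  have hw : 0 ≤ ∑ i, ∑ j, ∑ k, ∑ l, W i j k l * W i j k l :=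
    Finset.sum_nonneg fun i _ => Finset.sum_nonneg fun j _ =>
      Finset.sum_nonneg fun k _ => Finset.sum_nonneg fun l _ => mul_self_nonneg _
  have hc0 : 0 ≤ c := by rw [hc_def]; positivity
  have hal0 : 0 ≤ al := by
    rw [hal_def]
    exact div_nonneg (by linarith) (by linarith)
  have hs2 : (∑ i, ∑ j, ∑ k, ∑ l, W i j k l * A i k * A j l)^2
      ≤ (∑ i, ∑ j, ∑ k, ∑ l, W i j k l * W i j k l)
        * (al * (Stmt8.aa A * Stmt8.aa A) - c * D) := by
    have h := Stmt8.cs4 W (Stmt8.VV A)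
    rw [contrW, hVsq] at h
    exact h
  have ht2 : (∑ i, ∑ j, ∑ k, A i j * A j k * A k i)^2 ≤ Stmt8.aa A * D := by
    have h := Stmt8.cs2 A (Stmt8.BB A)
    rw [hABv] at h
    exact h
  exact Stmt8.final_abs _ _ _ _ _ _ _ hc0 hal0 ha hw hD0 hM hs2 ht2
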